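/- Let V be a d×d positive definite matrix with smallest eigenvalue at least k, and for t = 1,…,n let X_t be d×m_t matrices with m_t ≤ k and each column of X_t having Euclidean norm at most 1. Define V_0 = V and V_t = V_{t-1} + X_t X_tᵀ. Then Σ_{t=1}^n tr(X_tᵀ V_{t-1}⁻¹ X_t) ≤ 2·log(det(V_n)) − 2·log(det(V)). -/

import Mathlib

open Matrix Finset

private lemma aux_prod_one_add {ι : Type*} (s : Finset ι) (f : ι → ℝ)
    (hf : ∀ i ∈ s, 0 ≤ f i) : 1 + ∑ i ∈ s, f i ≤ ∏ i ∈ s, (1 + f i) := by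
  induction s using Finset.cons_induction with
  | empty => simp
  | cons a s ha ih =>
    rw [Finset.sum_cons, Finset.prod_cons]
    have h1 : 0 ≤ f a := hf a (Finset.mem_cons_self a s)
    have h2 : 0 ≤ ∑ i ∈ s, f i :=
      Finset.sum_nonneg fun i hi => hf i (Finset.mem_cons_of_mem hi)
    have h3 := ih fun i hi => hf i (Finset.mem_cons_of_mem hi)
    nlinarith

private lemma aux_det_one_add {p : ℕ} {M : Matrix (Fin p) (Fin p) ℝ} (hM : M.PosSemidef) :
    1 + M.trace ≤ (1 + M).det := by
  have hH := hM.isHermitian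
  set U : Matrix (Fin p) (Fin p) ℝ := (hH.eigenvectorUnitary : Matrix (Fin p) (Fin p) ℝ) with hU
  have hUU : U * star U = 1 := mem_unitaryGroup_iff.mp hH.eigenvectorUnitary.2
  have hUU' : star U * U = 1 := mem_unitaryGroup_iff'.mp hH.eigenvectorUnitary.2
  have hDcast : Matrix.diagonal (RCLike.ofReal ∘ hH.eigenvalues) =
      Matrix.diagonal hH.eigenvalues := by
    congr 1
  have hspec : M = U * Matrix.diagonal hH.eigenvalues * star U := by
    rw [← hDcast]; exact hH.spectral_theorem
  have htr : M.trace = ∑ i, hH.eigenvalues i := by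
    conv_lhs => rw [hspec]
    rw [Matrix.trace_mul_cycle, hUU', Matrix.one_mul, Matrix.trace_diagonal]
  have hone : (1 : Matrix (Fin p) (Fin p) ℝ) = U * 1 * star U := by
    rw [Matrix.mul_one, hUU]
  have hsum : (1 : Matrix (Fin p) (Fin p) ℝ) + M =
      U * Matrix.diagonal (fun i => 1 + hH.eigenvalues i) * star U := by
    conv_lhs => rw [hspec, hone]
    rw [← Matrix.add_mul, ← Matrix.mul_add, ← Matrix.diagonal_one, Matrix.diagonal_add]
  have hdet : (1 + M).det = ∏ i, (1 + hH.eigenvalues i) := by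
    rw [hsum, Matrix.det_mul_right_comm, Matrix.det_mul, hUU, Matrix.det_one, one_mul,
      Matrix.det_diagonal]
  rw [htr, hdet]
  exact aux_prod_one_add Finset.univ _ fun i _ => hM.eigenvalues_nonneg i

private lemma aux_log_bound {y : ℝ} (h0 : 0 ≤ y) (h1 : y ≤ 1) :
    y ≤ 2 * Real.log (1 + y) := by
  have hpos : (0:ℝ) < 1 + y := by linarith
  have h := Real.log_le_sub_one_of_pos (x := (1 + y)⁻¹) (by positivity)
  rw [Real.log_inv] at h
  have h2 : 1 - (1 + y)⁻¹ ≤ Real.log (1 + y) := by linarith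
  have h3 : 1 - (1 + y)⁻¹ = y / (1 + y) := by field_simp; ring
  have h4 : y / 2 ≤ y / (1 + y) :=
    div_le_div_of_nonneg_left h0 hpos (by linarith)
  linarith [h4.trans (h3 ▸ h2)]

private lemma aux_inv_quad {d : ℕ} {k : ℝ} (hk : 0 < k) {Wm : Matrix (Fin d) (Fin d) ℝ}
    (hWm : Wm.PosDef) (hlow : ∀ x : Fin d → ℝ, k * (x ⬝ᵥ x) ≤ x ⬝ᵥ (Wm *ᵥ x))
    (x : Fin d → ℝ) : x ⬝ᵥ (Wm⁻¹ *ᵥ x) ≤ (x ⬝ᵥ x) / k := by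
  set y := Wm⁻¹ *ᵥ x with hy
  have hdetu : IsUnit Wm.det := isUnit_iff_ne_zero.mpr hWm.det_pos.ne'
  have hWy : Wm *ᵥ y = x := by
    rw [hy, Matrix.mulVec_mulVec, Matrix.mul_nonsing_inv _ hdetu, Matrix.one_mulVec]
  have hq : x ⬝ᵥ y = y ⬝ᵥ (Wm *ᵥ y) := by rw [hWy, dotProduct_comm]
  have hlower : k * (y ⬝ᵥ y) ≤ x ⬝ᵥ y := hq ▸ hlow y
  have hxx : 0 ≤ x ⬝ᵥ x := Finset.sum_nonneg fun i _ => mul_self_nonneg _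
  have hyy : 0 ≤ y ⬝ᵥ y := Finset.sum_nonneg fun i _ => mul_self_nonneg _
  have hCS : (x ⬝ᵥ y) ^ 2 ≤ (x ⬝ᵥ x) * (y ⬝ᵥ y) := by
    have := Finset.sum_mul_sq_le_sq_mul_sq Finset.univ x y
    simpa [dotProduct, sq, Finset.mul_sum] using this
  rcases le_or_gt (x ⬝ᵥ y) 0 with hle | hgt
  · exact hle.trans (by positivity)
  · rw [le_div_iff₀ hk]
    nlinarith

theorem stmt13 (d n : ℕ) (k : ℝ) (V : Matrix (Fin d) (Fin d) ℝ) (hV : V.PosDef)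
    (hk : ∀ i, k ≤ hV.1.eigenvalues i)
    (m : ℕ → ℕ) (hm : ∀ t, (m t : ℝ) ≤ k)
    (X : (t : ℕ) → Matrix (Fin d) (Fin (m t)) ℝ)
    (hX : ∀ t (i : Fin (m t)), ∑ j, (X t j i) ^ 2 ≤ 1)
    (W : ℕ → Matrix (Fin d) (Fin d) ℝ)
    (hW0 : W 0 = V)
    (hW : ∀ t, W (t + 1) = W t + X t * (X t)ᵀ) :
    ∑ t ∈ Finset.range n, ((X t)ᵀ * (W t)⁻¹ * X t).trace ≤
      2 * Real.log (W n).det - 2 * Real.log V.det := by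
  rcases le_or_gt k 0 with hkneg | hkpos
  · -- degenerate case: all m t = 0
    have hm0 : ∀ t, m t = 0 := by
      intro t
      have h : (m t : ℝ) ≤ 0 := (hm t).trans hkneg
      exact_mod_cast le_antisymm (by exact_mod_cast h) (Nat.zero_le _)
    have hE : ∀ t, IsEmpty (Fin (m t)) := fun t => by rw [hm0 t]; infer_instance
    have hXX : ∀ t, X t * (X t)ᵀ = 0 := by
      intro t
      have := hE t
      ext i j
      simp [Matrix.mul_apply]
    have hWt : ∀ t, W t = V := by
      intro t; induction t with
      | zero => exact hW0
      | succ t ih => rw [hW t, hXX t, add_zero, ih]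
    have htr : ∀ t, ((X t)ᵀ * (W t)⁻¹ * X t).trace = 0 := by
      intro t; have := hE t; simp [Matrix.trace]
    rw [hWt n]
    simp [htr]
  · -- main case
    have key : ∀ t, (W t).PosDef ∧ ∀ x : Fin d → ℝ, k * (x ⬝ᵥ x) ≤ x ⬝ᵥ (W t *ᵥ x) := by
      intro t
      induction t with
      | zero =>
        rw [hW0]
        refine ⟨hV, fun x => ?_⟩
        have hH := hV.1
        set U : Matrix (Fin d) (Fin d) ℝ := (hH.eigenvectorUnitary : Matrix (Fin d) (Fin d) ℝ)
          with hUdef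
        have hUU : U * star U = 1 := mem_unitaryGroup_iff.mp hH.eigenvectorUnitary.2
        have hDcast : Matrix.diagonal (RCLike.ofReal ∘ hH.eigenvalues) =
            Matrix.diagonal hH.eigenvalues := by congr 1
        have hspec : V = U * Matrix.diagonal hH.eigenvalues * star U := by
          rw [← hDcast]; exact hH.spectral_theorem
        have hk1 : U * Matrix.diagonal (fun _ : Fin d => k) * star U =
            k • (1 : Matrix (Fin d) (Fin d) ℝ) := by
          rw [← Matrix.smul_one_eq_diagonal, mul_smul_comm, smul_mul_assoc, Matrix.mul_one, hUU]
        have hsub : V - k • (1 : Matrix (Fin d) (Fin d) ℝ) =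
            U * Matrix.diagonal (fun i => hH.eigenvalues i - k) * star U := by
          conv_lhs => rw [hspec, ← hk1]
          rw [← Matrix.sub_mul, ← Matrix.mul_sub, Matrix.diagonal_sub]
        have hpsd : (V - k • (1 : Matrix (Fin d) (Fin d) ℝ)).PosSemidef := by
          rw [hsub]
          have := (posSemidef_diagonal_iff.mpr
            (fun i => sub_nonneg.mpr (hk i))).mul_mul_conjTranspose_same U
          simpa [Matrix.star_eq_conjTranspose] using this
        have h0 := hpsd.dotProduct_mulVec_nonneg x
        simp only [star_trivial] at h0
        rw [Matrix.sub_mulVec, dotProduct_sub, Matrix.smul_mulVec, Matrix.one_mulVec,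
          dotProduct_smul, smul_eq_mul] at h0
        linarith
      | succ t ih =>
        rw [hW t]
        have hXXpsd : (X t * (X t)ᵀ).PosSemidef := by
          have := Matrix.posSemidef_self_mul_conjTranspose (X t)
          rwa [Matrix.conjTranspose_eq_transpose_of_trivial] at this
        refine ⟨ih.1.add_posSemidef hXXpsd, fun x => ?_⟩
        rw [Matrix.add_mulVec, dotProduct_add]
        have h0 : 0 ≤ x ⬝ᵥ ((X t * (X t)ᵀ) *ᵥ x) := by
          have := hXXpsd.dotProduct_mulVec_nonneg x
          simpa [star_trivial] using this
        linarith [ih.2 x]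
    have step : ∀ t, ((X t)ᵀ * (W t)⁻¹ * X t).trace ≤
        2 * Real.log (W (t+1)).det - 2 * Real.log (W t).det := by
      intro t
      obtain ⟨hWpd, hlow⟩ := key t
      have hWinv : ((W t)⁻¹).PosDef := hWpd.inv
      set M := (X t)ᵀ * (W t)⁻¹ * X t with hM
      have hMpsd : M.PosSemidef := by
        have := hWinv.posSemidef.conjTranspose_mul_mul_same (X t)
        rwa [Matrix.conjTranspose_eq_transpose_of_trivial] at this
      have hdiag : ∀ i, M i i = (fun j => X t j i) ⬝ᵥ ((W t)⁻¹ *ᵥ fun j => X t j i) := by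
        intro i
        simp only [hM, Matrix.mul_apply, Matrix.transpose_apply, dotProduct, Matrix.mulVec,
          Finset.sum_mul, Finset.mul_sum]
        rw [Finset.sum_comm]
        exact Finset.sum_congr rfl fun l _ => Finset.sum_congr rfl fun j _ => by ring
      have hdiag_le : ∀ i, M i i ≤ 1 / k := by
        intro i
        have hx : (fun j => X t j i) ⬝ᵥ (fun j => X t j i) ≤ 1 := by
          simpa [dotProduct, sq] using hX t i
        rw [hdiag i]
        calc (fun j => X t j i) ⬝ᵥ ((W t)⁻¹ *ᵥ fun j => X t j i)
            ≤ ((fun j => X t j i) ⬝ᵥ fun j => X t j i) / k :=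
              aux_inv_quad hkpos hWpd hlow _
          _ ≤ 1 / k := by gcongr
      have hdiag_nonneg : ∀ i, 0 ≤ M i i := by
        intro i
        rw [hdiag i]
        have := hWinv.posSemidef.dotProduct_mulVec_nonneg (fun j => X t j i)
        simpa [star_trivial] using this
      have htr_nonneg : 0 ≤ M.trace := Finset.sum_nonneg fun i _ => hdiag_nonneg i
      have htr_le : M.trace ≤ 1 := by
        have h1 : M.trace ≤ (m t : ℝ) * (1 / k) := by
          have := Finset.sum_le_sum fun i (_ : i ∈ Finset.univ) => hdiag_le i
          simpa [Matrix.trace, Matrix.diag, Finset.sum_const, Finset.card_univ, nsmul_eq_mul]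
            using this
        calc M.trace ≤ (m t : ℝ) * (1 / k) := h1
          _ ≤ k * (1 / k) := by gcongr; exact hm t
          _ = 1 := mul_one_div_cancel hkpos.ne'
      have hdetu : IsUnit (W t).det := isUnit_iff_ne_zero.mpr hWpd.det_pos.ne'
      have hfact : W (t+1) = W t * (1 + (W t)⁻¹ * (X t * (X t)ᵀ)) := by
        rw [hW t, Matrix.mul_add, Matrix.mul_one, ← Matrix.mul_assoc,
          Matrix.mul_nonsing_inv _ hdetu, Matrix.one_mul]
      have hdet : (W (t+1)).det = (W t).det * (1 + M).det := by
        rw [hfact, Matrix.det_mul]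
        congr 1
        rw [show (W t)⁻¹ * (X t * (X t)ᵀ) = ((W t)⁻¹ * X t) * (X t)ᵀ from
          (Matrix.mul_assoc _ _ _).symm, Matrix.det_one_add_mul_comm, hM, Matrix.mul_assoc]
      have hdet1 : (0:ℝ) < (1 + M).det := lt_of_lt_of_le (by linarith) (aux_det_one_add hMpsd)
      have hlog2 : Real.log (W (t+1)).det = Real.log (W t).det + Real.log (1 + M).det := by
        rw [hdet, Real.log_mul hWpd.det_pos.ne' hdet1.ne']
      calc M.trace ≤ 2 * Real.log (1 + M.trace) := aux_log_bound htr_nonneg htr_le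
        _ ≤ 2 * Real.log (1 + M).det := by
            have hda := aux_det_one_add hMpsd
            gcongr <;> linarith
        _ = 2 * Real.log (W (t+1)).det - 2 * Real.log (W t).det := by rw [hlog2]; ring
    calc ∑ t ∈ Finset.range n, ((X t)ᵀ * (W t)⁻¹ * X t).trace
        ≤ ∑ t ∈ Finset.range n, (2 * Real.log (W (t+1)).det - 2 * Real.log (W t).det) :=
          Finset.sum_le_sum fun t _ => step t
      _ = 2 * Real.log (W n).det - 2 * Real.log (W 0).det :=
          Finset.sum_range_sub (fun t => 2 * Real.log (W t).det) n
      _ = 2 * Real.log (W n).det - 2 * Real.log V.det := by rw [hW0]
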